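/- In the abelian sandpile model on Z^d with n particles at the origin and background h ≤ 2d-2, there exists r_n such that the toppling cluster T_n satisfies D(r_n − 1) ⊆ T_n ⊆ C(r_n), where D is the discrete diamond and C the discrete cube. -/

import Mathlib

/-- The `i`-th standard unit vector of `ℤ^d`. -/
def unitVec (d : ℕ) (i : Fin d) : Fin d → ℤ := fun j => if j = i then 1 else 0

/-- Height function obtained from the initial heights `H0` after performing `T x` (sandpile)
topplings at every site `x`: each toppling of `x` removes `2d` particles from `x` and sends
one particle to each of its `2d` nearest neighbors. -/
def newH (d : ℕ) (H0 : (Fin d → ℤ) → ℤ) (T : (Fin d → ℤ) → ℕ) (x : Fin d → ℤ) : ℤ :=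
  H0 x - 2 * d * T x + ∑ i : Fin d, ((T (x + unitVec d i) : ℤ) + (T (x - unitVec d i) : ℤ))

/-- A sandpile height function is stable if every site has at most `2d - 1` particles. -/
def SandpileStable (d : ℕ) (H : (Fin d → ℤ) → ℤ) : Prop := ∀ x, H x ≤ 2 * d - 1

/-- `T` is the odometer (toppling function of the stabilization) of the initial configuration
`H0`: it has finite support, its result is stable, and it is pointwise minimal among all
finitely supported toppling functions with stable result (least action principle; this
characterizes the toppling function produced by legal topplings, by the abelian property). -/
def IsOdometer (d : ℕ) (H0 : (Fin d → ℤ) → ℤ) (T : (Fin d → ℤ) → ℕ) : Prop :=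
  (Function.support T).Finite ∧ SandpileStable d (newH d H0 T) ∧
    ∀ T' : (Fin d → ℤ) → ℕ, (Function.support T').Finite →
      SandpileStable d (newH d H0 T') → ∀ x, T x ≤ T' x

/-- Initial configuration: `n` particles at the origin, background height `h` elsewhere. -/
def initH (d : ℕ) (n : ℕ) (h : ℤ) : (Fin d → ℤ) → ℤ := fun x => if x = 0 then (n : ℤ) else h

/-- In the abelian sandpile model on `ℤ^d` with `n` particles at the origin and background
`h ≤ 2d - 2`, there exists `r_n` such that the toppling cluster `T_n` (the set of sites that
topple at least once) satisfies `D(r_n − 1) ⊆ T_n ⊆ C(r_n)`, where `D` is the discrete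
diamond and `C` the discrete cube. -/
lemma reflect_le (d n : ℕ) (h : ℤ) (hn : h ≤ (n : ℤ)) (T : (Fin d → ℤ) → ℕ)
    (hT : IsOdometer d (initH d n h) T)
    (ρ : (Fin d → ℤ) → (Fin d → ℤ)) (P : (Fin d → ℤ) → Prop)
    (hsum : ∀ z : Fin d → ℤ,
      ∑ i : Fin d, ((T (ρ (z + unitVec d i)) : ℤ) + (T (ρ (z - unitVec d i)) : ℤ))
        = ∑ i : Fin d, ((T (ρ z + unitVec d i) : ℤ) + (T (ρ z - unitVec d i) : ℤ)))
    (hnbr : ∀ z, P z → ρ z ≠ z → ∀ i, P (z + unitVec d i) ∧ P (z - unitVec d i))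
    (hzero : ∀ z, P z → ρ z ≠ z → z ≠ 0) :
    ∀ z, P z → T z ≤ T (ρ z) := by
  classical
  set T' : (Fin d → ℤ) → ℕ := fun w => if P w then min (T w) (T (ρ w)) else T w with hT'
  have hle : ∀ w, T' w ≤ T w := by
    intro w; simp only [hT']; split
    · exact min_le_left _ _
    · exact le_refl _
  have hfin : (Function.support T').Finite := by
    apply hT.1.subset
    intro w hw
    simp only [Function.mem_support] at hw ⊢
    intro h0
    apply hw
    have := hle w
    omega
  have hstab : SandpileStable d (newH d (initH d n h) T') := by
    intro z
    by_cases hc : P z ∧ T (ρ z) < T z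
    · obtain ⟨hPz, hlt⟩ := hc
      have hne : ρ z ≠ z := by
        intro e; rw [e] at hlt; exact lt_irrefl _ hlt
      have hTz' : T' z = T (ρ z) := by
        simp only [hT', if_pos hPz]; exact min_eq_right hlt.le
      have hnb : ∀ i : Fin d, (T' (z + unitVec d i) : ℤ) + (T' (z - unitVec d i) : ℤ)
          ≤ (T (ρ (z + unitVec d i)) : ℤ) + (T (ρ (z - unitVec d i)) : ℤ) := by
        intro i
        obtain ⟨hp1, hp2⟩ := hnbr z hPz hne i
        have e1 : T' (z + unitVec d i) ≤ T (ρ (z + unitVec d i)) := by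
          simp only [hT', if_pos hp1]; exact min_le_right _ _
        have e2 : T' (z - unitVec d i) ≤ T (ρ (z - unitVec d i)) := by
          simp only [hT', if_pos hp2]; exact min_le_right _ _
        push_cast; omega
      have hinit : initH d n h z ≤ initH d n h (ρ z) := by
        have hz0 : z ≠ 0 := hzero z hPz hne
        simp only [initH, if_neg hz0]
        split
        · exact hn
        · exact le_refl _
      calc newH d (initH d n h) T' z
          = initH d n h z - 2 * d * T' z
            + ∑ i : Fin d, ((T' (z + unitVec d i) : ℤ) + (T' (z - unitVec d i) : ℤ)) := rfl
        _ ≤ initH d n h (ρ z) - 2 * d * T (ρ z)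
            + ∑ i : Fin d, ((T (ρ (z + unitVec d i)) : ℤ) + (T (ρ (z - unitVec d i)) : ℤ)) := by
            rw [hTz']
            have hs : ∑ i : Fin d, ((T' (z + unitVec d i) : ℤ) + (T' (z - unitVec d i) : ℤ))
                ≤ ∑ i : Fin d, ((T (ρ (z + unitVec d i)) : ℤ) + (T (ρ (z - unitVec d i)) : ℤ)) :=
              Finset.sum_le_sum (fun i _ => hnb i)
            omega
        _ = initH d n h (ρ z) - 2 * d * T (ρ z)
            + ∑ i : Fin d, ((T (ρ z + unitVec d i) : ℤ) + (T (ρ z - unitVec d i) : ℤ)) := by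
            rw [hsum z]
        _ = newH d (initH d n h) T (ρ z) := rfl
        _ ≤ 2 * d - 1 := hT.2.1 (ρ z)
    · have hTz' : T' z = T z := by
        simp only [hT']
        split
        · rename_i hP
          have : ¬ T (ρ z) < T z := fun hl => hc ⟨hP, hl⟩
          omega
        · rfl
      calc newH d (initH d n h) T' z
          = initH d n h z - 2 * d * T' z
            + ∑ i : Fin d, ((T' (z + unitVec d i) : ℤ) + (T' (z - unitVec d i) : ℤ)) := rfl
        _ ≤ initH d n h z - 2 * d * T z
            + ∑ i : Fin d, ((T (z + unitVec d i) : ℤ) + (T (z - unitVec d i) : ℤ)) := by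
            rw [hTz']
            apply add_le_add le_rfl
            apply Finset.sum_le_sum
            intro i _
            have := hle (z + unitVec d i)
            have := hle (z - unitVec d i)
            push_cast; omega
        _ = newH d (initH d n h) T z := rfl
        _ ≤ 2 * d - 1 := hT.2.1 z
  intro z hz
  have h1 := hT.2.2 T' hfin hstab z
  have h2 : T' z ≤ T (ρ z) := by
    simp only [hT', if_pos hz]; exact min_le_right _ _
  omega

lemma move_reflect1 (d n : ℕ) (h : ℤ) (hn : h ≤ (n : ℤ)) (T : (Fin d → ℤ) → ℕ)
    (hT : IsOdometer d (initH d n h) T) (i : Fin d) (m : ℤ) (hm : 0 ≤ m)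
    (z : Fin d → ℤ) (hz : m ≤ z i) :
    T z ≤ T (fun t => if t = i then 2 * m - z i else z t) := by
  have key := reflect_le d n h hn T hT (fun w t => if t = i then 2 * m - w i else w t)
    (fun w => m ≤ w i) ?_ ?_ ?_ z hz
  · exact key
  · intro w
    apply Finset.sum_congr rfl
    intro t _
    beta_reduce
    by_cases ht : t = i
    · subst ht
      have e1 : (fun x => if x = t then 2 * m - (w + unitVec d t) t else (w + unitVec d t) x)
          = (fun x => if x = t then 2 * m - w t else w x) - unitVec d t := by
        funext x; simp only [Pi.add_apply, Pi.sub_apply, unitVec]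
        split_ifs <;> first | omega | simp_all
      have e2 : (fun x => if x = t then 2 * m - (w - unitVec d t) t else (w - unitVec d t) x)
          = (fun x => if x = t then 2 * m - w t else w x) + unitVec d t := by
        funext x; simp only [Pi.add_apply, Pi.sub_apply, unitVec]
        split_ifs <;> first | omega | simp_all
      rw [e1, e2]; ring
    · have e1 : (fun x => if x = i then 2 * m - (w + unitVec d t) i else (w + unitVec d t) x)
          = (fun x => if x = i then 2 * m - w i else w x) + unitVec d t := by
        funext x; simp only [Pi.add_apply, Pi.sub_apply, unitVec]
        split_ifs <;> first | omega | simp_all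
      have e2 : (fun x => if x = i then 2 * m - (w - unitVec d t) i else (w - unitVec d t) x)
          = (fun x => if x = i then 2 * m - w i else w x) - unitVec d t := by
        funext x; simp only [Pi.add_apply, Pi.sub_apply, unitVec]
        split_ifs <;> first | omega | simp_all
      rw [e1, e2]
  · intro w hw hne t
    have hwi : m + 1 ≤ w i := by
      rcases lt_or_eq_of_le hw with h' | h'
      · omega
      · exfalso; apply hne; funext x
        by_cases hx : x = i
        · subst hx; simp only [if_pos rfl]; omega
        · simp [hx]
    constructor <;>
      · show m ≤ _
        simp only [Pi.add_apply, Pi.sub_apply, unitVec]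
        split_ifs <;> omega
  · intro w hw hne hw0
    have hwi : m + 1 ≤ w i := by
      rcases lt_or_eq_of_le hw with h' | h'
      · omega
      · exfalso; apply hne; funext x
        by_cases hx : x = i
        · subst hx; simp only [if_pos rfl]; omega
        · simp [hx]
    rw [hw0] at hwi; simp at hwi; omega

lemma move_reflect1' (d n : ℕ) (h : ℤ) (hn : h ≤ (n : ℤ)) (T : (Fin d → ℤ) → ℕ)
    (hT : IsOdometer d (initH d n h) T) (i : Fin d) (m : ℤ) (hm : m ≤ 0)
    (z : Fin d → ℤ) (hz : z i ≤ m) :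
    T z ≤ T (fun t => if t = i then 2 * m - z i else z t) := by
  have key := reflect_le d n h hn T hT (fun w t => if t = i then 2 * m - w i else w t)
    (fun w => w i ≤ m) ?_ ?_ ?_ z hz
  · exact key
  · intro w
    apply Finset.sum_congr rfl
    intro t _
    beta_reduce
    by_cases ht : t = i
    · subst ht
      have e1 : (fun x => if x = t then 2 * m - (w + unitVec d t) t else (w + unitVec d t) x)
          = (fun x => if x = t then 2 * m - w t else w x) - unitVec d t := by
        funext x; simp only [Pi.add_apply, Pi.sub_apply, unitVec]
        split_ifs <;> first | omega | simp_all
      have e2 : (fun x => if x = t then 2 * m - (w - unitVec d t) t else (w - unitVec d t) x)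
          = (fun x => if x = t then 2 * m - w t else w x) + unitVec d t := by
        funext x; simp only [Pi.add_apply, Pi.sub_apply, unitVec]
        split_ifs <;> first | omega | simp_all
      rw [e1, e2]; ring
    · have e1 : (fun x => if x = i then 2 * m - (w + unitVec d t) i else (w + unitVec d t) x)
          = (fun x => if x = i then 2 * m - w i else w x) + unitVec d t := by
        funext x; simp only [Pi.add_apply, Pi.sub_apply, unitVec]
        split_ifs <;> first | omega | simp_all
      have e2 : (fun x => if x = i then 2 * m - (w - unitVec d t) i else (w - unitVec d t) x)
          = (fun x => if x = i then 2 * m - w i else w x) - unitVec d t := by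
        funext x; simp only [Pi.add_apply, Pi.sub_apply, unitVec]
        split_ifs <;> first | omega | simp_all
      rw [e1, e2]
  · intro w hw hne t
    have hwi : w i ≤ m - 1 := by
      rcases lt_or_eq_of_le hw with h' | h'
      · omega
      · exfalso; apply hne; funext x
        by_cases hx : x = i
        · subst hx; simp only [if_pos rfl]; omega
        · simp [hx]
    constructor <;>
      · show _ ≤ m
        simp only [Pi.add_apply, Pi.sub_apply, unitVec]
        split_ifs <;> omega
  · intro w hw hne hw0
    have hwi : w i ≤ m - 1 := by
      rcases lt_or_eq_of_le hw with h' | h'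
      · omega
      · exfalso; apply hne; funext x
        by_cases hx : x = i
        · subst hx; simp only [if_pos rfl]; omega
        · simp [hx]
    rw [hw0] at hwi; simp at hwi; omega

lemma move_reflect2 (d n : ℕ) (h : ℤ) (hn : h ≤ (n : ℤ)) (T : (Fin d → ℤ) → ℕ)
    (hT : IsOdometer d (initH d n h) T) (i j : Fin d) (hij : i ≠ j) (c : ℤ) (hc : 0 ≤ c)
    (z : Fin d → ℤ) (hz : c ≤ z i - z j) :
    T z ≤ T (fun t => if t = i then z j + c else if t = j then z i - c else z t) := by
  have key := reflect_le d n h hn T hT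
    (fun w t => if t = i then w j + c else if t = j then w i - c else w t)
    (fun w => c ≤ w i - w j) ?_ ?_ ?_ z hz
  · exact key
  · intro w
    apply Fintype.sum_equiv (Equiv.swap i j)
      (fun t => ((T ((fun w t => if t = i then w j + c else if t = j then w i - c else w t) (w + unitVec d t)) : ℤ)
        + (T ((fun w t => if t = i then w j + c else if t = j then w i - c else w t) (w - unitVec d t)) : ℤ)))
      (fun t => ((T ((fun w t => if t = i then w j + c else if t = j then w i - c else w t) w + unitVec d t) : ℤ)
        + (T ((fun w t => if t = i then w j + c else if t = j then w i - c else w t) w - unitVec d t) : ℤ)))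
    intro t
    beta_reduce
    by_cases hti : t = i
    · subst hti
      rw [Equiv.swap_apply_left]
      have e1 : (fun x => if x = t then (w + unitVec d t) j + c else if x = j then (w + unitVec d t) t - c else (w + unitVec d t) x)
          = (fun x => if x = t then w j + c else if x = j then w t - c else w x) + unitVec d j := by
        funext x; simp only [Pi.add_apply, unitVec]
        split_ifs <;> first | omega | simp_all
      have e2 : (fun x => if x = t then (w - unitVec d t) j + c else if x = j then (w - unitVec d t) t - c else (w - unitVec d t) x)
          = (fun x => if x = t then w j + c else if x = j then w t - c else w x) - unitVec d j := by
        funext x; simp only [Pi.sub_apply, unitVec]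
        split_ifs <;> first | omega | simp_all
      rw [e1, e2]
    · by_cases htj : t = j
      · subst htj
        rw [Equiv.swap_apply_right]
        have e1 : (fun x => if x = i then (w + unitVec d t) t + c else if x = t then (w + unitVec d t) i - c else (w + unitVec d t) x)
            = (fun x => if x = i then w t + c else if x = t then w i - c else w x) + unitVec d i := by
          funext x; simp only [Pi.add_apply, unitVec]
          split_ifs <;> first | omega | simp_all
        have e2 : (fun x => if x = i then (w - unitVec d t) t + c else if x = t then (w - unitVec d t) i - c else (w - unitVec d t) x)
            = (fun x => if x = i then w t + c else if x = t then w i - c else w x) - unitVec d i := by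
          funext x; simp only [Pi.sub_apply, unitVec]
          split_ifs <;> first | omega | simp_all
        rw [e1, e2]
      · rw [Equiv.swap_apply_of_ne_of_ne hti htj]
        have e1 : (fun x => if x = i then (w + unitVec d t) j + c else if x = j then (w + unitVec d t) i - c else (w + unitVec d t) x)
            = (fun x => if x = i then w j + c else if x = j then w i - c else w x) + unitVec d t := by
          funext x; simp only [Pi.add_apply, unitVec]
          split_ifs <;> first | omega | simp_all
        have e2 : (fun x => if x = i then (w - unitVec d t) j + c else if x = j then (w - unitVec d t) i - c else (w - unitVec d t) x)
            = (fun x => if x = i then w j + c else if x = j then w i - c else w x) - unitVec d t := by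
          funext x; simp only [Pi.sub_apply, unitVec]
          split_ifs <;> first | omega | simp_all
        rw [e1, e2]
  · intro w hw hne t
    have hwi : c + 1 ≤ w i - w j := by
      rcases lt_or_eq_of_le hw with h' | h'
      · omega
      · exfalso; apply hne; funext x
        by_cases hx : x = i
        · subst hx; simp only [if_pos rfl]; omega
        · by_cases hx' : x = j
          · subst hx'; simp [hx]; omega
          · simp [hx, hx']
    constructor <;>
      · show c ≤ _
        simp only [Pi.add_apply, Pi.sub_apply, unitVec]
        split_ifs <;> omega
  · intro w hw hne hw0
    have hwi : c + 1 ≤ w i - w j := by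
      rcases lt_or_eq_of_le hw with h' | h'
      · omega
      · exfalso; apply hne; funext x
        by_cases hx : x = i
        · subst hx; simp only [if_pos rfl]; omega
        · by_cases hx' : x = j
          · subst hx'; simp [hx]; omega
          · simp [hx, hx']
    rw [hw0] at hwi; simp at hwi; omega

lemma move_reflect3 (d n : ℕ) (h : ℤ) (hn : h ≤ (n : ℤ)) (T : (Fin d → ℤ) → ℕ)
    (hT : IsOdometer d (initH d n h) T) (i j : Fin d) (hij : i ≠ j) (c : ℤ) (hc : 0 ≤ c)
    (z : Fin d → ℤ) (hz : c ≤ z i + z j) :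
    T z ≤ T (fun t => if t = i then c - z j else if t = j then c - z i else z t) := by
  have key := reflect_le d n h hn T hT
    (fun w t => if t = i then c - w j else if t = j then c - w i else w t)
    (fun w => c ≤ w i + w j) ?_ ?_ ?_ z hz
  · exact key
  · intro w
    apply Fintype.sum_equiv (Equiv.swap i j)
      (fun t => ((T ((fun w t => if t = i then c - w j else if t = j then c - w i else w t) (w + unitVec d t)) : ℤ)
        + (T ((fun w t => if t = i then c - w j else if t = j then c - w i else w t) (w - unitVec d t)) : ℤ)))
      (fun t => ((T ((fun w t => if t = i then c - w j else if t = j then c - w i else w t) w + unitVec d t) : ℤ)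
        + (T ((fun w t => if t = i then c - w j else if t = j then c - w i else w t) w - unitVec d t) : ℤ)))
    intro t
    beta_reduce
    by_cases hti : t = i
    · subst hti
      rw [Equiv.swap_apply_left]
      have e1 : (fun x => if x = t then c - (w + unitVec d t) j else if x = j then c - (w + unitVec d t) t else (w + unitVec d t) x)
          = (fun x => if x = t then c - w j else if x = j then c - w t else w x) - unitVec d j := by
        funext x; simp only [Pi.add_apply, Pi.sub_apply, unitVec]
        split_ifs <;> first | omega | simp_all
      have e2 : (fun x => if x = t then c - (w - unitVec d t) j else if x = j then c - (w - unitVec d t) t else (w - unitVec d t) x)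
          = (fun x => if x = t then c - w j else if x = j then c - w t else w x) + unitVec d j := by
        funext x; simp only [Pi.add_apply, Pi.sub_apply, unitVec]
        split_ifs <;> first | omega | simp_all
      rw [e1, e2]; ring
    · by_cases htj : t = j
      · subst htj
        rw [Equiv.swap_apply_right]
        have e1 : (fun x => if x = i then c - (w + unitVec d t) t else if x = t then c - (w + unitVec d t) i else (w + unitVec d t) x)
            = (fun x => if x = i then c - w t else if x = t then c - w i else w x) - unitVec d i := by
          funext x; simp only [Pi.add_apply, Pi.sub_apply, unitVec]
          split_ifs <;> first | omega | simp_all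
        have e2 : (fun x => if x = i then c - (w - unitVec d t) t else if x = t then c - (w - unitVec d t) i else (w - unitVec d t) x)
            = (fun x => if x = i then c - w t else if x = t then c - w i else w x) + unitVec d i := by
          funext x; simp only [Pi.add_apply, Pi.sub_apply, unitVec]
          split_ifs <;> first | omega | simp_all
        rw [e1, e2]; ring
      · rw [Equiv.swap_apply_of_ne_of_ne hti htj]
        have e1 : (fun x => if x = i then c - (w + unitVec d t) j else if x = j then c - (w + unitVec d t) i else (w + unitVec d t) x)
            = (fun x => if x = i then c - w j else if x = j then c - w i else w x) + unitVec d t := by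
          funext x; simp only [Pi.add_apply, Pi.sub_apply, unitVec]
          split_ifs <;> first | omega | simp_all
        have e2 : (fun x => if x = i then c - (w - unitVec d t) j else if x = j then c - (w - unitVec d t) i else (w - unitVec d t) x)
            = (fun x => if x = i then c - w j else if x = j then c - w i else w x) - unitVec d t := by
          funext x; simp only [Pi.add_apply, Pi.sub_apply, unitVec]
          split_ifs <;> first | omega | simp_all
        rw [e1, e2]
  · intro w hw hne t
    have hwi : c + 1 ≤ w i + w j := by
      rcases lt_or_eq_of_le hw with h' | h'
      · omega
      · exfalso; apply hne; funext x
        by_cases hx : x = i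
        · subst hx; simp only [if_pos rfl]; omega
        · by_cases hx' : x = j
          · subst hx'; simp [hx]; omega
          · simp [hx, hx']
    constructor <;>
      · show c ≤ _
        simp only [Pi.add_apply, Pi.sub_apply, unitVec]
        split_ifs <;> omega
  · intro w hw hne hw0
    have hwi : c + 1 ≤ w i + w j := by
      rcases lt_or_eq_of_le hw with h' | h'
      · omega
      · exfalso; apply hne; funext x
        by_cases hx : x = i
        · subst hx; simp only [if_pos rfl]; omega
        · by_cases hx' : x = j
          · subst hx'; simp [hx]; omega
          · simp [hx, hx']
    rw [hw0] at hwi; simp at hwi; omega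

lemma moveDown2 (d n : ℕ) (h : ℤ) (hn : h ≤ (n : ℤ)) (T : (Fin d → ℤ) → ℕ)
    (hT : IsOdometer d (initH d n h) T) (i : Fin d) (z : Fin d → ℤ) (h1 : 1 ≤ z i) :
    T z ≤ T (fun t => if t = i then z i - 2 else z t) := by
  have key := move_reflect1 d n h hn T hT i (z i - 1) (by omega) z (by omega)
  have e : (fun t => if t = i then 2 * (z i - 1) - z i else z t)
      = (fun t => if t = i then z i - 2 else z t) := by
    funext t; split_ifs <;> omega
  rwa [e] at key

lemma flipEq (d n : ℕ) (h : ℤ) (hn : h ≤ (n : ℤ)) (T : (Fin d → ℤ) → ℕ)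
    (hT : IsOdometer d (initH d n h) T) (i : Fin d) (z : Fin d → ℤ) :
    T (fun t => if t = i then -(z i) else z t) = T z := by
  set z' : Fin d → ℤ := fun t => if t = i then -(z i) else z t with hz'
  have hz'i : z' i = -(z i) := by simp [hz']
  have ezz : (fun t => if t = i then 2 * 0 - z' i else z' t) = z := by
    funext t; simp only [hz']; split_ifs with ht <;> simp [ht]
  rcases le_or_gt 0 (z i) with hpos | hneg
  · have h1 := move_reflect1 d n h hn T hT i 0 le_rfl z (by omega)
    have h2 := move_reflect1' d n h hn T hT i 0 le_rfl z' (by omega)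
    rw [ezz] at h2
    have e : (fun t => if t = i then 2 * 0 - z i else z t) = z' := by
      funext t; simp only [hz']; split_ifs <;> omega
    rw [e] at h1
    omega
  · have h1 := move_reflect1' d n h hn T hT i 0 le_rfl z (by omega)
    have h2 := move_reflect1 d n h hn T hT i 0 le_rfl z' (by omega)
    rw [ezz] at h2
    have e : (fun t => if t = i then 2 * 0 - z i else z t) = z' := by
      funext t; simp only [hz']; split_ifs <;> omega
    rw [e] at h1
    omega

lemma absT_aux (d n : ℕ) (h : ℤ) (hn : h ≤ (n : ℤ)) (T : (Fin d → ℤ) → ℕ)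
    (hT : IsOdometer d (initH d n h) T) :
    ∀ (m : ℕ) (z : Fin d → ℤ), (Finset.univ.filter (fun i => z i < 0)).card = m →
      T (fun i => |z i|) = T z := by
  intro m
  induction m with
  | zero =>
    intro z hz
    have : ∀ i, 0 ≤ z i := by
      intro i
      by_contra hi
      have : i ∈ Finset.univ.filter (fun i => z i < 0) := by
        simp; omega
      rw [Finset.card_eq_zero] at hz
      rw [hz] at this
      exact absurd this (Finset.notMem_empty i)
    have e : (fun i => |z i|) = z := by
      funext i; exact abs_of_nonneg (this i)
    rw [e]
  | succ m ih =>
    intro z hz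
    have hne : (Finset.univ.filter (fun i => z i < 0)).Nonempty := by
      rw [← Finset.card_pos, hz]; omega
    obtain ⟨i, hi⟩ := hne
    have hzi : z i < 0 := by simp at hi; exact hi
    set z' : Fin d → ℤ := fun t => if t = i then -(z i) else z t with hz'd
    have hfil : Finset.univ.filter (fun t => z' t < 0)
        = (Finset.univ.filter (fun t => z t < 0)).erase i := by
      ext t
      simp only [Finset.mem_filter, Finset.mem_erase, Finset.mem_univ, true_and, hz'd]
      constructor
      · intro ht
        by_cases hti : t = i
        · subst hti; rw [if_pos rfl] at ht; omega
        · rw [if_neg hti] at ht; exact ⟨hti, ht⟩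
      · intro ⟨hti, ht⟩; rw [if_neg hti]; exact ht
    have hcard : (Finset.univ.filter (fun t => z' t < 0)).card = m := by
      rw [hfil, Finset.card_erase_of_mem hi, hz]
      omega
    have habs : (fun t => |z' t|) = (fun t => |z t|) := by
      funext t; simp only [hz'd]; split_ifs with ht
      · subst ht; exact abs_neg _
      · rfl
    have := ih z' hcard
    rw [habs] at this
    rw [this, flipEq d n h hn T hT i z]

lemma absT (d n : ℕ) (h : ℤ) (hn : h ≤ (n : ℤ)) (T : (Fin d → ℤ) → ℕ)
    (hT : IsOdometer d (initH d n h) T) (z : Fin d → ℤ) :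
    T (fun i => |z i|) = T z :=
  absT_aux d n h hn T hT _ z rfl

lemma odometer_zero (d n : ℕ) (h : ℤ) (hh : h ≤ 2 * d - 2) (T : (Fin d → ℤ) → ℕ)
    (hT : IsOdometer d (initH d n h) T) (hsmall : (n : ℤ) ≤ 2 * d - 1) :
    ∀ x, T x = 0 := by
  intro x
  have hstab : SandpileStable d (newH d (initH d n h) (fun _ => 0)) := by
    intro y
    have : newH d (initH d n h) (fun _ => 0) y = initH d n h y := by
      simp [newH]
    rw [this, initH]
    split
    · exact hsmall
    · omega
  have hfin : (Function.support (fun _ : Fin d → ℤ => (0:ℕ))).Finite := by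
    convert Set.finite_empty
    simp [Function.support]
  have := hT.2.2 _ hfin hstab x
  omega

lemma newH_nonneg (d n : ℕ) (h : ℤ) (T : (Fin d → ℤ) → ℕ)
    (hT : IsOdometer d (initH d n h) T) (z : Fin d → ℤ) (h1 : 1 ≤ T z) :
    0 ≤ newH d (initH d n h) T z := by
  by_contra hneg
  push_neg at hneg
  classical
  set T' : (Fin d → ℤ) → ℕ := fun w => if w = z then T z - 1 else T w with hT'
  have hle : ∀ w, T' w ≤ T w := by
    intro w; simp only [hT']; split
    · rename_i hw; subst hw; omega
    · exact le_rfl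
  have hfin : (Function.support T').Finite := by
    apply hT.1.subset
    intro w hw
    simp only [Function.mem_support] at hw ⊢
    intro h0; apply hw
    have := hle w; omega
  have hsum : ∀ x, ∑ i : Fin d, ((T' (x + unitVec d i) : ℤ) + (T' (x - unitVec d i) : ℤ))
      ≤ ∑ i : Fin d, ((T (x + unitVec d i) : ℤ) + (T (x - unitVec d i) : ℤ)) := by
    intro x
    apply Finset.sum_le_sum
    intro i _
    have := hle (x + unitVec d i); have := hle (x - unitVec d i)
    push_cast; omega
  have hstab : SandpileStable d (newH d (initH d n h) T') := by
    intro x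
    by_cases hx : x = z
    · subst hx
      have hc : ((T x - 1 : ℕ) : ℤ) = (T x : ℤ) - 1 := by omega
      have hstabx := hT.2.1 x
      have hs := hsum x
      simp only [newH] at hneg ⊢
      simp only [hT', if_pos rfl, hc]
      have hd0 : (0:ℤ) ≤ (d:ℤ) := by positivity
      nlinarith [hs, hneg]
    · have hx' : T' x = T x := by simp only [hT', if_neg hx]
      have hs := hsum x
      have hstabx := hT.2.1 x
      simp only [newH] at hstabx ⊢
      rw [hx']
      omega
  have := hT.2.2 T' hfin hstab z
  simp only [hT', if_pos rfl] at this
  omega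

lemma exists_nbr (d n : ℕ) (h : ℤ) (hh : h ≤ 2 * d - 2) (T : (Fin d → ℤ) → ℕ)
    (hT : IsOdometer d (initH d n h) T) (z : Fin d → ℤ) (hz0 : z ≠ 0) (h1 : 1 ≤ T z) :
    ∃ i, 0 < T (z + unitVec d i) ∨ 0 < T (z - unitVec d i) := by
  have hnn := newH_nonneg d n h T hT z h1
  simp only [newH, initH, if_neg hz0] at hnn
  by_contra hno
  push_neg at hno
  have hzero : ∑ i : Fin d, ((T (z + unitVec d i) : ℤ) + (T (z - unitVec d i) : ℤ)) = 0 := by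
    apply Finset.sum_eq_zero
    intro i _
    have := (hno i).1
    have := (hno i).2
    omega
  rw [hzero] at hnn
  have : (1:ℤ) * (2 * d) ≤ (T z : ℤ) * (2 * d) := by
    apply mul_le_mul_of_nonneg_right _ (by positivity)
    exact_mod_cast h1
  nlinarith

lemma sum_if_single (d : ℕ) (v : Fin d → ℤ) (j : Fin d) (c : ℤ) :
    ∑ t : Fin d, (if t = j then c else v t) = ∑ t : Fin d, v t + c - v j := by
  have h1 : ∑ t : Fin d, ((if t = j then c else v t) - v t)
      = ∑ t : Fin d, (if t = j then c - v t else 0) :=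
    Finset.sum_congr rfl (fun t _ => by split_ifs <;> ring)
  have h2 : ∑ t : Fin d, (if t = j then c - v t else (0:ℤ)) = c - v j := by
    rw [Finset.sum_ite_eq' Finset.univ j (fun t => c - v t)]
    simp
  have h3 : ∑ t : Fin d, ((if t = j then c else v t) - v t)
      = ∑ t : Fin d, (if t = j then c else v t) - ∑ t : Fin d, v t :=
    Finset.sum_sub_distrib _ _
  omega

lemma sum_if_double (d : ℕ) (v : Fin d → ℤ) (i j : Fin d) (hij : i ≠ j) (A B : ℤ) :
    ∑ t : Fin d, (if t = i then A else if t = j then B else v t)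
      = ∑ t : Fin d, v t + A + B - v i - v j := by
  have e : (fun t => if t = i then A else if t = j then B else v t)
      = (fun t => if t = i then A else (fun s => if s = j then B else v s) t) := by
    funext t; by_cases h1 : t = i <;> simp [h1]
  calc ∑ t : Fin d, (if t = i then A else if t = j then B else v t)
      = ∑ t : Fin d, (if t = i then A else (fun s => if s = j then B else v s) t) := by rw [e]
    _ = ∑ t : Fin d, (fun s => if s = j then B else v s) t + A
        - (fun s => if s = j then B else v s) i := sum_if_single d _ i A
    _ = ∑ t : Fin d, v t + A + B - v i - v j := by
        rw [sum_if_single d v j B]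
        simp only [if_neg hij]
        ring

lemma moveStep2 (d n : ℕ) (h : ℤ) (hn : h ≤ (n : ℤ)) (T : (Fin d → ℤ) → ℕ)
    (hT : IsOdometer d (initH d n h) T) (i j : Fin d) (hij : i ≠ j)
    (z : Fin d → ℤ) (hgt : z j < z i) :
    T z ≤ T (fun t => if t = i then z i - 1 else if t = j then z j + 1 else z t) := by
  have key := move_reflect2 d n h hn T hT i j hij (z i - z j - 1) (by omega) z (by omega)
  have e : (fun t => if t = i then z j + (z i - z j - 1) else if t = j then z i - (z i - z j - 1) else z t)
      = (fun t => if t = i then z i - 1 else if t = j then z j + 1 else z t) := by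
    funext t; split_ifs <;> omega
  rwa [e] at key

lemma moveStep3 (d n : ℕ) (h : ℤ) (hn : h ≤ (n : ℤ)) (T : (Fin d → ℤ) → ℕ)
    (hT : IsOdometer d (initH d n h) T) (i j : Fin d) (hij : i ≠ j)
    (z : Fin d → ℤ) (hsum1 : 1 ≤ z i + z j) :
    T z ≤ T (fun t => if t = i then z i - 1 else if t = j then z j - 1 else z t) := by
  have key := move_reflect3 d n h hn T hT i j hij (z i + z j - 1) (by omega) z (by omega)
  have e : (fun t => if t = i then (z i + z j - 1) - z j else if t = j then (z i + z j - 1) - z i else z t)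
      = (fun t => if t = i then z i - 1 else if t = j then z j - 1 else z t) := by
    funext t; split_ifs <;> omega
  rwa [e] at key

lemma spikeSwap (d n : ℕ) (h : ℤ) (hn : h ≤ (n : ℤ)) (T : (Fin d → ℤ) → ℕ)
    (hT : IsOdometer d (initH d n h) T) (s : ℤ) (hs : 0 ≤ s) (k k' : Fin d) :
    T (fun t => if t = k then s else 0) ≤ T (fun t => if t = k' then s else 0) := by
  by_cases hkk : k = k'
  · subst hkk; exact le_rfl
  · set z : Fin d → ℤ := fun t => if t = k then s else 0 with hzd
    have hz1 : z k = s := by simp [hzd]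
    have hz2 : z k' = 0 := by simp [hzd, hkk, Ne.symm hkk]
    have key := move_reflect2 d n h hn T hT k k' hkk 0 le_rfl z (by omega)
    have e : (fun t => if t = k then z k' + 0 else if t = k' then z k - 0 else z t)
        = (fun t => if t = k' then s else 0) := by
      funext t
      by_cases h1 : t = k
      · subst h1; rw [if_pos rfl, if_neg hkk, hz2]; omega
      · rw [if_neg h1]
        by_cases h2 : t = k'
        · subst h2; rw [if_pos rfl, if_pos rfl, hz1]; omega
        · rw [if_neg h2, if_neg h2, hzd]; simp [h1]
    rwa [e] at key

lemma claimD_aux (d n : ℕ) (h : ℤ) (hn : h ≤ (n : ℤ)) (T : (Fin d → ℤ) → ℕ)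
    (hT : IsOdometer d (initH d n h) T) :
    ∀ (m : ℕ) (k : Fin d) (y : Fin d → ℤ), (∀ i, 0 ≤ y i) → (∀ j, y j ≤ y k) →
      (∑ i, y i) - y k = m → T (fun t => if t = k then (∑ i, y i) else 0) ≤ T y := by
  intro m
  induction m with
  | zero =>
    intro k y hy0 hymax hsum
    have hz : ∀ j, j ≠ k → y j = 0 := by
      intro j hj
      have her : ∑ t ∈ Finset.univ.erase k, y t = 0 := by
        rw [Finset.sum_erase_eq_sub (Finset.mem_univ k)]
        omega
      have := (Finset.sum_eq_zero_iff_of_nonneg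
        (fun t _ => hy0 t)).mp her j (by simp [hj])
      exact this
    have e : (fun t => if t = k then (∑ i, y i) else 0) = y := by
      funext t
      by_cases ht : t = k
      · subst ht; rw [if_pos rfl]; omega
      · rw [if_neg ht]; exact (hz t ht).symm
    rw [e]
  | succ m ih =>
    intro k y hy0 hymax hsum
    have hex : ∃ j, j ≠ k ∧ 1 ≤ y j := by
      by_contra hno
      push_neg at hno
      have her : ∑ t ∈ Finset.univ.erase k, y t = 0 := by
        apply Finset.sum_eq_zero
        intro t ht
        have htk : t ≠ k := (Finset.mem_erase.mp ht).1
        have := hno t htk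
        have := hy0 t
        omega
      rw [Finset.sum_erase_eq_sub (Finset.mem_univ k)] at her
      omega
    obtain ⟨j, hjk, hj1⟩ := hex
    set y' : Fin d → ℤ := fun t => if t = k then y k + 1 else if t = j then y j - 1 else y t with hy'd
    have hy'k : y' k = y k + 1 := by simp [hy'd]
    have hy'j : y' j = y j - 1 := by simp [hy'd, hjk]
    have hy'sum : ∑ i, y' i = ∑ i, y i := by
      rw [hy'd, sum_if_double d y k j (Ne.symm hjk) (y k + 1) (y j - 1)]
      ring
    have ih' := ih k y' ?_ ?_ ?_
    · rw [hy'sum] at ih'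
      refine le_trans ih' ?_
      have key := moveStep2 d n h hn T hT k j (Ne.symm hjk) y' (by rw [hy'k, hy'j]; have := hymax j; omega)
      have e : (fun t => if t = k then y' k - 1 else if t = j then y' j + 1 else y' t) = y := by
        funext t
        by_cases h1 : t = k
        · subst h1; rw [if_pos rfl, hy'k]; ring
        · rw [if_neg h1]
          by_cases h2 : t = j
          · subst h2; rw [if_pos rfl, hy'j]; ring
          · rw [if_neg h2, hy'd]; simp [h1, h2]
      rwa [e] at key
    · intro i
      rw [hy'd]
      beta_reduce
      split_ifs with h1 h2
      · have := hy0 k; omega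
      · omega
      · exact hy0 i
    · intro i
      rw [hy'k, hy'd]
      beta_reduce
      split_ifs with h1 h2
      · omega
      · have := hymax j; omega
      · have := hymax i; omega
    · rw [hy'sum, hy'k]; omega

lemma claimD (d n : ℕ) (h : ℤ) (hn : h ≤ (n : ℤ)) (T : (Fin d → ℤ) → ℕ)
    (hT : IsOdometer d (initH d n h) T) (k : Fin d) (y : Fin d → ℤ) (hy0 : ∀ i, 0 ≤ y i) :
    T (fun t => if t = k then (∑ i, y i) else 0) ≤ T y := by
  haveI : Nonempty (Fin d) := ⟨k⟩
  obtain ⟨k', hk'⟩ := Finite.exists_max y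
  have hs0 : 0 ≤ ∑ i, y i := Finset.sum_nonneg (fun i _ => hy0 i)
  have h1 : T (fun t => if t = k then (∑ i, y i) else 0)
      ≤ T (fun t => if t = k' then (∑ i, y i) else 0) :=
    spikeSwap d n h hn T hT _ hs0 k k'
  refine le_trans h1 ?_
  have hnn : 0 ≤ (∑ i, y i) - y k' := by
    rw [← Finset.sum_erase_eq_sub (Finset.mem_univ k')]
    exact Finset.sum_nonneg (fun i _ => hy0 i)
  exact claimD_aux d n h hn T hT ((∑ i, y i) - y k').toNat k' y hy0 hk'
    (by rw [Int.toNat_of_nonneg hnn])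

lemma claimC (d n : ℕ) (h : ℤ) (hn : h ≤ (n : ℤ)) (T : (Fin d → ℤ) → ℕ)
    (hT : IsOdometer d (initH d n h) T) :
    ∀ (u : ℕ) (k : Fin d) (y z : Fin d → ℤ), (∀ i, 0 ≤ y i) → (∀ i, 0 ≤ z i) →
      (∑ i, y i) ≤ z k → (∑ i, z i) = (∑ i, y i) + 2 * u → T z ≤ T y := by
  intro u
  induction u with
  | zero =>
    intro k y z hy0 hz0 hyk hsum
    have hzk : z k ≤ ∑ i, z i := Finset.single_le_sum (fun i _ => hz0 i) (Finset.mem_univ k)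
    have her : ∑ t ∈ Finset.univ.erase k, z t = 0 := by
      rw [Finset.sum_erase_eq_sub (Finset.mem_univ k)]
      omega
    have hz : ∀ j, j ≠ k → z j = 0 := by
      intro j hj
      exact (Finset.sum_eq_zero_iff_of_nonneg (fun t _ => hz0 t)).mp her j (by simp [hj])
    have hzkv : z k = ∑ i, y i := by
      rw [Finset.sum_erase_eq_sub (Finset.mem_univ k)] at her
      omega
    have e : z = (fun t => if t = k then (∑ i, y i) else 0) := by
      funext t
      by_cases ht : t = k
      · rw [if_pos ht, ht, hzkv]
      · rw [if_neg ht]; exact hz t ht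
    rw [e]
    exact claimD d n h hn T hT k y hy0
  | succ u ih =>
    intro k y z hy0 hz0 hyk hsum
    by_cases hA : ∃ j, j ≠ k ∧ 2 ≤ z j
    · obtain ⟨j, hjk, hj2⟩ := hA
      set z' : Fin d → ℤ := fun t => if t = j then z j - 2 else z t with hz'd
      have key := moveDown2 d n h hn T hT j z (by omega)
      have h0 : ∀ i, 0 ≤ z' i := by
        intro i; simp only [hz'd]; split_ifs
        · omega
        · exact hz0 i
      have hk : z' k = z k := by simp only [hz'd]; rw [if_neg (Ne.symm hjk)]
      have hsum' : ∑ i, z' i = ∑ i, z i - 2 := by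
        simp only [hz'd]; rw [sum_if_single d z j (z j - 2)]; omega
      exact le_trans key (ih k y z' hy0 h0 (by omega) (by push_cast at hsum ⊢; omega))
    · by_cases hB : ∃ j1 j2, j1 ≠ j2 ∧ j1 ≠ k ∧ j2 ≠ k ∧ 1 ≤ z j1 ∧ 1 ≤ z j2
      · obtain ⟨j1, j2, h12, h1k, h2k, hzj1, hzj2⟩ := hB
        set z' : Fin d → ℤ := fun t => if t = j1 then z j1 - 1 else if t = j2 then z j2 - 1 else z t with hz'd
        have key := moveStep3 d n h hn T hT j1 j2 h12 z (by omega)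
        have h0 : ∀ i, 0 ≤ z' i := by
          intro i; simp only [hz'd]; split_ifs
          · omega
          · omega
          · exact hz0 i
        have hk : z' k = z k := by
          simp only [hz'd]; rw [if_neg (Ne.symm h1k), if_neg (Ne.symm h2k)]
        have hsum' : ∑ i, z' i = ∑ i, z i - 2 := by
          simp only [hz'd]; rw [sum_if_double d z j1 j2 h12 (z j1 - 1) (z j2 - 1)]; omega
        exact le_trans key (ih k y z' hy0 h0 (by omega) (by push_cast at hsum ⊢; omega))
      · by_cases hC : ∃ j, j ≠ k ∧ 1 ≤ z j
        · obtain ⟨j, hjk, hj1⟩ := hC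
          push_neg at hA hB
          have hzj : z j = 1 := by
            have := hA j hjk
            omega
          have hothers : ∀ j', j' ≠ k → j' ≠ j → z j' = 0 := by
            intro j' hj'k hj'j
            have h2 := hB j j' (Ne.symm hj'j) hjk hj'k hj1
            have := hz0 j'
            omega
          have hzsum : ∑ i, z i = z k + 1 := by
            have her : ∑ t ∈ Finset.univ.erase k, z t = z j := by
              apply Finset.sum_eq_single_of_mem j (by simp [hjk])
              intro b hb hbj
              exact hothers b (Finset.mem_erase.mp hb).1 hbj
            rw [Finset.sum_erase_eq_sub (Finset.mem_univ k)] at her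
            omega
          set z' : Fin d → ℤ := fun t => if t = j then z j - 1 else if t = k then z k - 1 else z t with hz'd
          have key := moveStep3 d n h hn T hT j k hjk z (by have := hz0 k; omega)
          have h0 : ∀ i, 0 ≤ z' i := by
            intro i; simp only [hz'd]; split_ifs
            · omega
            · have := hz0 k; have hs0 : 0 ≤ ∑ i, y i := Finset.sum_nonneg (fun i _ => hy0 i)
              push_cast at hsum; omega
            · exact hz0 i
          have hk : z' k = z k - 1 := by
            simp only [hz'd]; rw [if_neg (Ne.symm hjk)]; simp
          have hsum' : ∑ i, z' i = ∑ i, z i - 2 := by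
            simp only [hz'd]; rw [sum_if_double d z j k hjk (z j - 1) (z k - 1)]; omega
          exact le_trans key (ih k y z' hy0 h0 (by push_cast at hsum; omega)
            (by push_cast at hsum ⊢; omega))
        · push_neg at hC
          have hzall : ∀ j, j ≠ k → z j = 0 := by
            intro j hj
            have := hC j hj
            have := hz0 j
            omega
          have hzsum : ∑ i, z i = z k := by
            have her : ∑ t ∈ Finset.univ.erase k, z t = 0 :=
              Finset.sum_eq_zero (fun t ht => hzall t (Finset.mem_erase.mp ht).1)
            rw [Finset.sum_erase_eq_sub (Finset.mem_univ k)] at her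
            omega
          set z' : Fin d → ℤ := fun t => if t = k then z k - 2 else z t with hz'd
          have hs0 : 0 ≤ ∑ i, y i := Finset.sum_nonneg (fun i _ => hy0 i)
          have key := moveDown2 d n h hn T hT k z (by push_cast at hsum; omega)
          have h0 : ∀ i, 0 ≤ z' i := by
            intro i; simp only [hz'd]; split_ifs
            · push_cast at hsum; omega
            · exact hz0 i
          have hk : z' k = z k - 2 := by simp [hz'd]
          have hsum' : ∑ i, z' i = ∑ i, z i - 2 := by
            simp only [hz'd]; rw [sum_if_single d z k (z k - 2)]; omega
          exact le_trans key (ih k y z' hy0 h0 (by push_cast at hsum; omega)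
            (by push_cast at hsum ⊢; omega))

theorem toppling_cluster_diamond_cube (d n : ℕ) (hd : 1 ≤ d) (h : ℤ) (hh : h ≤ 2 * d - 2)
    (T : (Fin d → ℤ) → ℕ) (hT : IsOdometer d (initH d n h) T) :
    ∃ r : ℕ, (∀ x : Fin d → ℤ, ∑ i, |x i| ≤ (r : ℤ) - 1 → 0 < T x) ∧
      (∀ x : Fin d → ℤ, 0 < T x → ∀ i, |x i| ≤ (r : ℤ)) := by
  classical
  by_cases hall : ∀ x, T x = 0
  · refine ⟨0, ?_, ?_⟩
    · intro x hx
      exfalso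
      have h0 : (0:ℤ) ≤ ∑ i, |x i| := Finset.sum_nonneg (fun i _ => abs_nonneg _)
      push_cast at hx
      omega
    · intro x hx
      rw [hall x] at hx
      omega
  · push_neg at hall
    obtain ⟨a0, ha0⟩ := hall
    have hn2d : 2 * (d:ℤ) ≤ (n:ℤ) := by
      by_contra hsmall
      push_neg at hsmall
      exact ha0 (odometer_zero d n h hh T hT (by omega) a0)
    have hn : h ≤ (n:ℤ) := by omega
    haveI : Nonempty (Fin d) := ⟨⟨0, hd⟩⟩
    set F := hT.1.toFinset with hFd
    have hmemF : ∀ x, 0 < T x ↔ x ∈ F := by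
      intro x
      rw [hFd, Set.Finite.mem_toFinset, Function.mem_support]
      omega
    have hFne : F.Nonempty := ⟨a0, (hmemF a0).mp (by omega)⟩
    obtain ⟨R, hRub, a, haF, k, hakR⟩ : ∃ R : ℕ, (∀ x ∈ F, ∀ i, (x i).natAbs ≤ R) ∧
        ∃ a ∈ F, ∃ k : Fin d, (a k).natAbs = R := by
      refine ⟨F.sup (fun x => Finset.univ.sup (fun i => (x i).natAbs)), ?_, ?_⟩
      · intro x hx i
        have g1 : (x i).natAbs ≤ Finset.univ.sup (fun i => (x i).natAbs) :=
          Finset.le_sup (f := fun i => (x i).natAbs) (Finset.mem_univ i)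
        have g2 : Finset.univ.sup (fun i => (x i).natAbs)
            ≤ F.sup (fun x => Finset.univ.sup (fun i => (x i).natAbs)) :=
          Finset.le_sup (f := fun x => Finset.univ.sup (fun i => (x i).natAbs)) hx
        exact le_trans g1 g2
      · obtain ⟨a, haF, haR⟩ := Finset.exists_mem_eq_sup F hFne
          (fun x => Finset.univ.sup (fun i => (x i).natAbs))
        obtain ⟨k, _, hkR⟩ := Finset.exists_mem_eq_sup Finset.univ Finset.univ_nonempty
          (fun i => (a i).natAbs)
        exact ⟨a, haF, k, by rw [← hkR, ← haR]⟩
    refine ⟨R, ?_, ?_⟩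
    swap
    · intro x hx i
      have h3 : (x i).natAbs ≤ R := hRub x ((hmemF x).mp hx) i
      calc |x i| = ((x i).natAbs : ℤ) := Int.abs_eq_natAbs _
        _ ≤ (R:ℤ) := by exact_mod_cast h3
    · intro x hx
      have hs0 : (0:ℤ) ≤ ∑ i, |x i| := Finset.sum_nonneg (fun i _ => abs_nonneg _)
      rcases Nat.eq_zero_or_pos R with hR0 | hR1
      · exfalso
        rw [hR0] at hx
        push_cast at hx
        omega
      set A : Fin d → ℤ := fun i => |a i| with hAd
      have hTa : 0 < T a := (hmemF a).mpr haF
      have hTA : 0 < T A := by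
        rw [hAd, absT d n h hn T hT a]
        exact hTa
      have hA0 : ∀ i, 0 ≤ A i := fun i => abs_nonneg _
      have hAk : A k = (R:ℤ) := by
        rw [hAd]
        simp only
        rw [Int.abs_eq_natAbs, hakR]
      have hAne : A ≠ 0 := by
        intro h0
        rw [h0] at hAk
        simp at hAk
        omega
      obtain ⟨j, hj⟩ := exists_nbr d n h hh T hT A hAne (by omega)
      have hbex : ∃ b : Fin d → ℤ, 0 < T b ∧ (∀ i, i ≠ j → b i = A i) ∧
          (b j = A j + 1 ∨ b j = A j - 1) := by
        rcases hj with hj | hj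
        · exact ⟨A + unitVec d j, hj, fun i hi => by simp [unitVec, hi],
            Or.inl (by simp [unitVec])⟩
        · exact ⟨A - unitVec d j, hj, fun i hi => by simp [unitVec, hi],
            Or.inr (by simp [unitVec])⟩
      obtain ⟨b, hTb, hbi, hbj⟩ := hbex
      set B : Fin d → ℤ := fun i => |b i| with hBd
      have hTB : 0 < T B := by
        rw [hBd, absT d n h hn T hT b]
        exact hTb
      have hB0 : ∀ i, 0 ≤ B i := fun i => abs_nonneg _
      have hBi : ∀ i, i ≠ j → B i = A i := by
        intro i hi
        rw [hBd]
        simp only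
        rw [hbi i hi]
        exact abs_of_nonneg (hA0 i)
      have hBj : B j = A j + 1 ∨ B j = A j - 1 := by
        rcases hbj with hb | hb
        · left
          rw [hBd]; simp only
          rw [hb]
          exact abs_of_nonneg (by have := hA0 j; omega)
        · rcases le_or_gt 1 (A j) with h1 | h1
          · right
            rw [hBd]; simp only
            rw [hb]
            exact abs_of_nonneg (by omega)
          · left
            have hAj0 : A j = 0 := by have := hA0 j; omega
            rw [hBd]; simp only
            rw [hb, hAj0]
            decide
      have hBk : (R:ℤ) - 1 ≤ B k := by
        by_cases hjk : k = j
        · subst hjk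
          rcases hBj with hb | hb <;> omega
        · rw [hBi k hjk]; omega
      have hsumdiff : ∑ i, B i = ∑ i, A i + (B j - A j) := by
        have e1 : ∑ t ∈ Finset.univ.erase j, B t = ∑ t ∈ Finset.univ.erase j, A t :=
          Finset.sum_congr rfl (fun t ht => hBi t (Finset.mem_erase.mp ht).1)
        rw [Finset.sum_erase_eq_sub (Finset.mem_univ j),
          Finset.sum_erase_eq_sub (Finset.mem_univ j)] at e1
        omega
      set X : Fin d → ℤ := fun i => |x i| with hXd
      have hX0 : ∀ i, 0 ≤ X i := fun i => abs_nonneg _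
      have hTX : T X = T x := absT d n h hn T hT x
      have hsX : ∑ i, X i ≤ (R:ℤ) - 1 := hx
      have hpA : (R:ℤ) ≤ ∑ i, A i := by
        have := Finset.single_le_sum (fun i (_ : i ∈ Finset.univ) => hA0 i) (Finset.mem_univ k)
        omega
      have hqB : ∑ i, X i ≤ ∑ i, B i := by
        have := Finset.single_le_sum (fun i (_ : i ∈ Finset.univ) => hB0 i) (Finset.mem_univ k)
        omega
      rcases Int.even_or_odd (∑ i, A i - ∑ i, X i) with ⟨c, hc⟩ | ⟨c, hc⟩
      · have hc0 : 0 ≤ c := by omega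
        have key := claimC d n h hn T hT c.toNat k X A hX0 hA0 (by omega)
          (by rw [Int.toNat_of_nonneg hc0]; push_cast; omega)
        omega
      · rcases hBj with hb | hb
        · have hc0 : 0 ≤ c + 1 := by omega
          have key := claimC d n h hn T hT (c+1).toNat k X B hX0 hB0 (by omega)
            (by rw [Int.toNat_of_nonneg hc0]; push_cast; omega)
          omega
        · have hc0 : 0 ≤ c := by omega
          have key := claimC d n h hn T hT c.toNat k X B hX0 hB0 (by omega)
            (by rw [Int.toNat_of_nonneg hc0]; push_cast; omega)
          omega
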